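/- arXiv:0705.2734 — 2 statements merged into one kernel-verified Lean document; each statement's English description precedes it below -/
import Mathlib

section
/- For every fixed k ≥ 2, the ordinary generating functions f_k(x) = Σ_{n≥0} D(n,k)x^n satisfy the recursion f_k(x) = (x^2/(1−kx)) · d/dx (x·f_{k−1}(x)), with f_1(x) = x^2/(1−x), as identities of formal power series. -/
open Finset

@[reducible] def ModelCond {n : ℕ} (f : Fin n → Fin n) (k : ℕ) : Prop :=
  (∀ x, f x ≤ x) ∧ (∀ x, f (f x) = f x) ∧
    (Finset.univ.filter (fun x => f x = x)).card = k ∧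
    (∀ x, ∃ y, y ≠ x ∧ f y = f x)

def Model (n k : ℕ) : Type := {f : Fin n → Fin n // ModelCond f k}

instance (n k : ℕ) : Finite (Model n k) := by unfold Model; infer_instance

namespace LeadAux

variable {n : ℕ} (P : Finpartition (univ : Finset (Fin n)))

noncomputable def lead (x : Fin n) : Fin n :=
  (P.part x).min' ⟨x, P.mem_part (mem_univ x)⟩

lemma lead_mem (x : Fin n) : lead P x ∈ P.part x := Finset.min'_mem _ _

lemma lead_le (x : Fin n) : lead P x ≤ x := Finset.min'_le _ _ (P.mem_part (mem_univ x))

lemma lead_eq_iff {x y : Fin n} : lead P y = lead P x ↔ y ∈ P.part x := by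
  constructor
  · intro h
    have h1 : lead P x ∈ P.part y := h ▸ lead_mem P y
    have h2 : lead P x ∈ P.part x := lead_mem P x
    have := P.eq_of_mem_parts (P.part_mem.2 (mem_univ y)) (P.part_mem.2 (mem_univ x)) h1 h2
    exact this ▸ P.mem_part (mem_univ y)
  · intro h
    have : P.part y = P.part x := P.part_eq_of_mem (P.part_mem.2 (mem_univ x)) h
    unfold lead
    congr 1

lemma lead_idem (x : Fin n) : lead P (lead P x) = lead P x :=
  (lead_eq_iff P).2 (lead_mem P x)

lemma lead_def (x : Fin n) : lead P x = (P.part x).min' ⟨x, P.mem_part (mem_univ x)⟩ := rfl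

lemma part_eq_min' {b : Finset (Fin n)} (hb : b ∈ P.parts) {x : Fin n} (hx : x ∈ b) :
    P.part x = b := P.part_eq_of_mem hb hx

lemma lead_card : (Finset.univ.filter (fun x => lead P x = x)).card = P.parts.card := by
  apply Finset.card_bij (fun x _ => P.part x)
  · intro a _; exact P.part_mem.2 (mem_univ a)
  · intro a ha b hb hab
    simp only [mem_filter] at ha hb
    have ha' : a = (P.part a).min' ⟨a, P.mem_part (mem_univ a)⟩ := ha.2.symm
    have hb' : b = (P.part b).min' ⟨b, P.mem_part (mem_univ b)⟩ := hb.2.symm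
    rw [ha', hb']
    congr 1
  · intro b hb
    obtain ⟨x, hx⟩ := P.nonempty_of_mem_parts hb
    have hpart : P.part x = b := P.part_eq_of_mem hb hx
    refine ⟨(P.part x).min' ⟨x, P.mem_part (mem_univ x)⟩, ?_, ?_⟩
    · simp only [mem_filter, mem_univ, true_and]
      exact (lead_eq_iff P).2 (lead_mem P x)
    · exact P.part_eq_of_mem hb (hpart ▸ lead_mem P x)

lemma lead_sizes :
    (∀ x, ∃ y, y ≠ x ∧ lead P y = lead P x) ↔ ∀ b ∈ P.parts, 2 ≤ b.card := by
  constructor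
  · intro h b hb
    obtain ⟨x, hx⟩ := P.nonempty_of_mem_parts hb
    obtain ⟨y, hyx, hy⟩ := h x
    rw [lead_eq_iff] at hy
    rw [P.part_eq_of_mem hb hx] at hy
    exact Finset.one_lt_card.2 ⟨y, hy, x, hx, hyx⟩
  · intro h x
    have h2 := h _ (P.part_mem.2 (mem_univ x))
    obtain ⟨y, hy, hyx⟩ := Finset.exists_mem_ne h2 x
    exact ⟨y, hyx, (lead_eq_iff P).2 hy⟩

lemma lead_inj {P Q : Finpartition (univ : Finset (Fin n))} (h : lead P = lead Q) : P = Q := by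
  ext b
  constructor
  all_goals intro hb
  · obtain ⟨x, hx⟩ := P.nonempty_of_mem_parts hb
    have : P.part x = Q.part x := by
      ext y
      rw [← lead_eq_iff P, ← lead_eq_iff Q, h]
    rw [← P.part_eq_of_mem hb hx, this]
    exact Q.part_mem.2 (mem_univ x)
  · obtain ⟨x, hx⟩ := Q.nonempty_of_mem_parts hb
    have : P.part x = Q.part x := by
      ext y
      rw [← lead_eq_iff P, ← lead_eq_iff Q, h]
    rw [← Q.part_eq_of_mem hb hx, ← this]
    exact P.part_mem.2 (mem_univ x)

lemma lead_surj (f : Fin n → Fin n) (h1 : ∀ x, f x ≤ x) (h2 : ∀ x, f (f x) = f x) :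
    ∃ P : Finpartition (univ : Finset (Fin n)), lead P = f := by
  set st : Setoid (Fin n) := ⟨fun a b => f a = f b, ⟨fun _ => rfl, Eq.symm, Eq.trans⟩⟩ with hst
  haveI : DecidableRel st.r := fun a b => instDecidableEqFin n (f a) (f b)
  refine ⟨Finpartition.ofSetoid st, ?_⟩
  funext x
  have hpartmem : ∀ y : Fin n, y ∈ (Finpartition.ofSetoid st).part x ↔ f x = f y := fun y =>
    Finpartition.mem_part_ofSetoid_iff_rel
  apply le_antisymm
  · apply Finset.min'_le
    rw [hpartmem]
    exact (h2 x).symm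
  · apply Finset.le_min'
    intro y hy
    rw [hpartmem] at hy
    calc f x = f y := hy
    _ ≤ y := h1 y

end LeadAux

noncomputable def partD (n k : ℕ) : ℕ :=
  Nat.card {P : Finpartition (Finset.univ : Finset (Fin n)) //
    P.parts.card = k ∧ ∀ b ∈ P.parts, 2 ≤ b.card}

noncomputable def leadMap (n k : ℕ)
    (P : {P : Finpartition (Finset.univ : Finset (Fin n)) //
      P.parts.card = k ∧ ∀ b ∈ P.parts, 2 ≤ b.card}) : Model n k :=
  ⟨LeadAux.lead P.1,
    LeadAux.lead_le P.1, LeadAux.lead_idem P.1,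
    by rw [LeadAux.lead_card]; exact P.2.1,
    (LeadAux.lead_sizes P.1).2 P.2.2⟩

lemma partD_eq_model (n k : ℕ) : partD n k = Nat.card (Model n k) := by
  unfold partD
  apply Nat.card_eq_of_bijective (leadMap n k)
  constructor
  · intro P Q h
    apply Subtype.ext
    exact LeadAux.lead_inj (congrArg Subtype.val h)
  · rintro ⟨f, h1, h2, h3, h4⟩
    obtain ⟨P, hP⟩ := LeadAux.lead_surj f h1 h2
    refine ⟨⟨P, ?_, ?_⟩, ?_⟩
    · rw [← LeadAux.lead_card, hP, h3]
    · rw [← LeadAux.lead_sizes, hP]; exact h4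
    · exact Subtype.ext hP

namespace ModelRec

variable {n k : ℕ}

def cdA (z : Fin (n+2)) : Fin (n+1) := ⟨min z.1 n, by omega⟩

lemma cdA_val {z : Fin (n+2)} (h : z.1 ≤ n) : (cdA z).1 = z.1 := by
  simp [cdA, h]

lemma fL_le {f : Fin (n+2) → Fin (n+2)} (h1 : ∀ x, f x ≤ x)
    (h4 : ∀ x, ∃ y, y ≠ x ∧ f y = f x) : (f (Fin.last (n+1))).1 ≤ n := by
  by_contra hc
  have hL : f (Fin.last (n+1)) = Fin.last (n+1) := by
    have h := h1 (Fin.last (n+1))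
    rw [Fin.le_def] at h
    have h2 := (f (Fin.last (n+1))).2
    ext
    simp only [Fin.val_last] at h ⊢
    omega
  obtain ⟨y, hy, hfy⟩ := h4 (Fin.last (n+1))
  rw [hL] at hfy
  have h := h1 y
  rw [Fin.le_def, hfy, Fin.val_last] at h
  have h2 := y.2
  exact hy (by ext; simp only [Fin.val_last]; omega)

lemma fL_ne {f : Fin (n+2) → Fin (n+2)} (h1 : ∀ x, f x ≤ x)
    (h4 : ∀ x, ∃ y, y ≠ x ∧ f y = f x) : f (Fin.last (n+1)) ≠ Fin.last (n+1) := by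
  intro hc
  have := fL_le h1 h4
  rw [hc, Fin.val_last] at this
  omega

/-! ### Case A -/

def gA (f : Fin (n+2) → Fin (n+2)) (x : Fin (n+1)) : Fin (n+1) := cdA (f x.castSucc)

def vA (f : Fin (n+2) → Fin (n+2)) : Fin (n+1) := cdA (f (Fin.last (n+1)))

lemma castSucc_gA {f : Fin (n+2) → Fin (n+2)} (h1 : ∀ x, f x ≤ x) (x : Fin (n+1)) :
    (gA f x).castSucc = f x.castSucc := by
  have h := h1 x.castSucc
  rw [Fin.le_def] at h
  have hx := x.2
  ext
  rw [Fin.coe_castSucc, gA, cdA_val (by simp only [Fin.coe_castSucc] at h; omega)]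

lemma castSucc_vA {f : Fin (n+2) → Fin (n+2)} (h1 : ∀ x, f x ≤ x)
    (h4 : ∀ x, ∃ y, y ≠ x ∧ f y = f x) :
    (vA f).castSucc = f (Fin.last (n+1)) := by
  ext
  rw [Fin.coe_castSucc, vA, cdA_val (fL_le h1 h4)]

lemma gA_le {f : Fin (n+2) → Fin (n+2)} (h1 : ∀ x, f x ≤ x) (x : Fin (n+1)) :
    gA f x ≤ x := by
  rw [← Fin.castSucc_le_castSucc_iff, castSucc_gA h1]
  exact h1 x.castSucc

lemma gA_idem {f : Fin (n+2) → Fin (n+2)} (h1 : ∀ x, f x ≤ x) (h2 : ∀ x, f (f x) = f x)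
    (x : Fin (n+1)) : gA f (gA f x) = gA f x := by
  have : (gA f (gA f x)).castSucc = (gA f x).castSucc := by
    rw [castSucc_gA h1, castSucc_gA h1, h2]
  exact Fin.castSucc_injective _ this

lemma gA_count {f : Fin (n+2) → Fin (n+2)} (h1 : ∀ x, f x ≤ x)
    (h4 : ∀ x, ∃ y, y ≠ x ∧ f y = f x) :
    (univ.filter fun x : Fin (n+1) => gA f x = x).card
      = (univ.filter fun z : Fin (n+2) => f z = z).card := by
  apply Finset.card_bij (fun x _ => x.castSucc)
  · intro x hx
    simp only [mem_filter, mem_univ, true_and] at hx ⊢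
    rw [← castSucc_gA h1, hx]
  · intro a _ b _ hab
    exact Fin.castSucc_injective _ hab
  · intro z hz
    simp only [mem_filter, mem_univ, true_and] at hz
    have hzne : z ≠ Fin.last (n+1) := by
      rintro rfl
      exact fL_ne h1 h4 hz
    refine ⟨⟨z.1, by have := z.2; have := Fin.val_lt_last hzne; omega⟩, ?_, by ext; simp⟩
    simp only [mem_filter, mem_univ, true_and]
    apply Fin.castSucc_injective
    rw [castSucc_gA h1]
    have hcs : Fin.castSucc (⟨z.1, by have := Fin.val_lt_last hzne; omega⟩ : Fin (n+1)) = z := by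
      ext; simp
    rw [hcs, hz]

lemma gA_leader {f : Fin (n+2) → Fin (n+2)} (h1 : ∀ x, f x ≤ x) (h2 : ∀ x, f (f x) = f x)
    (h4 : ∀ x, ∃ y, y ≠ x ∧ f y = f x) : gA f (vA f) = vA f := by
  apply Fin.castSucc_injective
  rw [castSucc_gA h1, castSucc_vA h1 h4, h2]

lemma gA_sizes {f : Fin (n+2) → Fin (n+2)} (h1 : ∀ x, f x ≤ x) (h2 : ∀ x, f (f x) = f x)
    (h4 : ∀ x, ∃ y, y ≠ x ∧ f y = f x)
    (hnp : ∃ z, f z = f (Fin.last (n+1)) ∧ z ≠ f (Fin.last (n+1)) ∧ z ≠ Fin.last (n+1))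
    (x : Fin (n+1)) : ∃ y, y ≠ x ∧ gA f y = gA f x := by
  obtain ⟨y', hy'ne, hy'⟩ := h4 x.castSucc
  have key : ∃ w : Fin (n+2), w ≠ x.castSucc ∧ w ≠ Fin.last (n+1) ∧ f w = f x.castSucc := by
    by_cases hyL : y' = Fin.last (n+1)
    · rw [hyL] at hy'
      obtain ⟨z, hz1, hz2, hz3⟩ := hnp
      by_cases hfL : f (Fin.last (n+1)) = x.castSucc
      · refine ⟨z, ?_, hz3, by rw [hz1, ← hy']⟩
        rw [← hfL]; exact hz2
      · exact ⟨f (Fin.last (n+1)), hfL, fL_ne h1 h4, by rw [h2, ← hy']⟩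
    · exact ⟨y', hy'ne, hyL, hy'⟩
  obtain ⟨w, hw1, hw2, hw3⟩ := key
  refine ⟨⟨w.1, by have := Fin.val_lt_last hw2; omega⟩, ?_, ?_⟩
  · intro hc
    apply hw1
    have := congrArg Fin.val hc
    simp only at this
    ext; simp [this]
  · apply Fin.castSucc_injective
    rw [castSucc_gA h1, castSucc_gA h1]
    have hcs : Fin.castSucc (⟨w.1, by have := Fin.val_lt_last hw2; omega⟩ : Fin (n+1)) = w := by
      ext; simp
    rw [hcs, hw3]

def fA (g : Fin (n+1) → Fin (n+1)) (v : Fin (n+1)) (z : Fin (n+2)) : Fin (n+2) :=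
  if z = Fin.last (n+1) then v.castSucc else (g (cdA z)).castSucc

lemma fA_last (g : Fin (n+1) → Fin (n+1)) (v : Fin (n+1)) :
    fA g v (Fin.last (n+1)) = v.castSucc := if_pos rfl

lemma cdA_castSucc (x : Fin (n+1)) : cdA x.castSucc = x := by
  ext
  rw [cdA_val (by simp; omega)]
  simp

lemma fA_castSucc (g : Fin (n+1) → Fin (n+1)) (v : Fin (n+1)) (x : Fin (n+1)) :
    fA g v x.castSucc = (g x).castSucc := by
  rw [fA, if_neg (Fin.castSucc_lt_last x).ne, cdA_castSucc]

lemma fA_count {g : Fin (n+1) → Fin (n+1)} (v : Fin (n+1)) (hv : g v = v) :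
    (univ.filter fun x : Fin (n+1) => g x = x).card
      = (univ.filter fun z : Fin (n+2) => fA g v z = z).card := by
  apply Finset.card_bij (fun x _ => x.castSucc)
  · intro a ha
    simp only [mem_filter, mem_univ, true_and] at ha ⊢
    rw [fA_castSucc, ha]
  · intro a _ b _ hab
    exact Fin.castSucc_injective _ hab
  · intro z hz
    simp only [mem_filter, mem_univ, true_and] at hz
    have hzne : z ≠ Fin.last (n+1) := by
      rintro rfl
      rw [fA_last] at hz
      exact (Fin.castSucc_lt_last v).ne hz
    refine ⟨⟨z.1, by have := Fin.val_lt_last hzne; omega⟩, ?_, by ext; simp⟩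
    simp only [mem_filter, mem_univ, true_and]
    apply Fin.castSucc_injective
    have hcs : Fin.castSucc (⟨z.1, by have := Fin.val_lt_last hzne; omega⟩ : Fin (n+1)) = z := by
      ext; simp
    rw [← fA_castSucc g v, hcs, hz]

lemma fA_cond {g : Fin (n+1) → Fin (n+1)} {v : Fin (n+1)} (hg : ModelCond g k)
    (hv : g v = v) : ModelCond (fA g v) k := by
  obtain ⟨h1, h2, h3, h4⟩ := hg
  refine ⟨?_, ?_, ?_, ?_⟩
  · intro z
    induction z using Fin.lastCases with
    | last => rw [fA_last]; exact Fin.le_last _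
    | cast x => rw [fA_castSucc, Fin.castSucc_le_castSucc_iff]; exact h1 x
  · intro z
    induction z using Fin.lastCases with
    | last => rw [fA_last, fA_castSucc, hv]
    | cast x => rw [fA_castSucc, fA_castSucc, h2]
  · rw [← fA_count v hv, h3]
  · intro z
    induction z using Fin.lastCases with
    | last =>
      refine ⟨v.castSucc, (Fin.castSucc_lt_last v).ne, ?_⟩
      rw [fA_castSucc, hv, fA_last]
    | cast x =>
      obtain ⟨y, hy, hgy⟩ := h4 x
      refine ⟨y.castSucc, ?_, ?_⟩
      · simp only [ne_eq, Fin.castSucc_inj]; exact hy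
      · rw [fA_castSucc, fA_castSucc, hgy]

lemma fA_np {g : Fin (n+1) → Fin (n+1)} {v : Fin (n+1)} (hg : ModelCond g k)
    (hv : g v = v) :
    ∃ z, fA g v z = fA g v (Fin.last (n+1)) ∧ z ≠ fA g v (Fin.last (n+1))
      ∧ z ≠ Fin.last (n+1) := by
  obtain ⟨y, hy, hgy⟩ := hg.2.2.2 v
  refine ⟨y.castSucc, ?_, ?_, (Fin.castSucc_lt_last y).ne⟩
  · rw [fA_castSucc, fA_last, hgy, hv]
  · rw [fA_last]
    simp only [ne_eq, Fin.castSucc_inj]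
    exact hy

def pA (f : Model (n+2) k) : Prop :=
  ∀ y, f.1 y = f.1 (Fin.last (n+1)) → y = f.1 (Fin.last (n+1)) ∨ y = Fin.last (n+1)

noncomputable def equivA :
    {f : Model (n+2) k // ¬ pA f} ≃
      {q : Model (n+1) k × Fin (n+1) // q.1.1 q.2 = q.2} where
  toFun F :=
    ⟨(⟨gA F.1.1, gA_le F.1.2.1, gA_idem F.1.2.1 F.1.2.2.1,
        by rw [gA_count F.1.2.1 F.1.2.2.2.2]; exact F.1.2.2.2.1,
        gA_sizes F.1.2.1 F.1.2.2.1 F.1.2.2.2.2 (by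
          have := F.2
          unfold pA at this
          push_neg at this
          obtain ⟨z, hz1, hz2, hz3⟩ := this
          exact ⟨z, hz1, hz2, hz3⟩)⟩,
      vA F.1.1),
      gA_leader F.1.2.1 F.1.2.2.1 F.1.2.2.2.2⟩
  invFun q :=
    ⟨⟨fA q.1.1.1 q.1.2, fA_cond q.1.1.2 q.2⟩, by
      unfold pA
      push_neg
      obtain ⟨z, hz1, hz2, hz3⟩ := fA_np q.1.1.2 q.2
      exact ⟨z, hz1, hz2, hz3⟩⟩
  left_inv F := by
    apply Subtype.ext
    apply Subtype.ext
    funext z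
    show fA (gA F.1.1) (vA F.1.1) z = F.1.1 z
    induction z using Fin.lastCases with
    | last => rw [fA_last, castSucc_vA F.1.2.1 F.1.2.2.2.2]
    | cast x => rw [fA_castSucc, castSucc_gA F.1.2.1]
  right_inv q := by
    apply Subtype.ext
    apply Prod.ext
    · apply Subtype.ext
      funext x
      show gA (fA q.1.1.1 q.1.2) x = q.1.1.1 x
      apply Fin.castSucc_injective
      rw [castSucc_gA (fA_cond q.1.1.2 q.2).1, fA_castSucc]
    · show vA (fA q.1.1.1 q.1.2) = q.1.2
      apply Fin.castSucc_injective
      rw [castSucc_vA (fA_cond q.1.1.2 q.2).1 (fA_cond q.1.1.2 q.2).2.2.2, fA_last]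


/-! ### Case B -/

def sB (j : Fin (n+1)) : Finset (Fin (n+2)) := {j.castSucc, Fin.last (n+1)}ᶜ

lemma mem_sB {j : Fin (n+1)} {z : Fin (n+2)} :
    z ∈ sB j ↔ z ≠ j.castSucc ∧ z ≠ Fin.last (n+1) := by
  simp [sB, not_or]

lemma sB_card (j : Fin (n+1)) : (sB j).card = n := by
  rw [sB, card_compl, Finset.card_pair (Fin.castSucc_lt_last j).ne]
  simp

noncomputable def eB (j : Fin (n+1)) : Fin n ≃o {x // x ∈ sB j} :=
  (sB j).orderIsoOfFin (sB_card j)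

lemma coe_eB_mem (j : Fin (n+1)) (x : Fin n) : ((eB j x : Fin (n+2))) ∈ sB j := (eB j x).2

noncomputable def fB (j : Fin (n+1)) (h : Fin n → Fin n) (z : Fin (n+2)) : Fin (n+2) :=
  if hz : z ∈ sB j then ((eB j) (h ((eB j).symm ⟨z, hz⟩)) : Fin (n+2)) else j.castSucc

lemma fB_apply_not {j : Fin (n+1)} (h : Fin n → Fin n) {z : Fin (n+2)} (hz : z ∉ sB j) :
    fB j h z = j.castSucc := dif_neg hz

lemma fB_last (j : Fin (n+1)) (h : Fin n → Fin n) :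
    fB j h (Fin.last (n+1)) = j.castSucc :=
  fB_apply_not h (by simp [mem_sB])

lemma fB_jup (j : Fin (n+1)) (h : Fin n → Fin n) :
    fB j h j.castSucc = j.castSucc :=
  fB_apply_not h (by simp [mem_sB])

lemma fB_coe (j : Fin (n+1)) (h : Fin n → Fin n) (x : Fin n) :
    fB j h ((eB j x : Fin (n+2))) = ((eB j (h x) : Fin (n+2))) := by
  rw [fB, dif_pos (coe_eB_mem j x)]
  congr 2
  rw [Subtype.coe_eta, OrderIso.symm_apply_apply]

/-- generic leader-set splitting lemma -/
lemma filter_split (f : Fin (n+2) → Fin (n+2)) (j : Fin (n+1)) (h : Fin n → Fin n)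
    (hcomm : ∀ x, ((eB j (h x) : Fin (n+2))) = f ((eB j x : Fin (n+2))))
    (hj : f j.castSucc = j.castSucc) (hlast : f (Fin.last (n+1)) ≠ Fin.last (n+1)) :
    univ.filter (fun z => f z = z)
      = insert j.castSucc ((univ.filter fun x => h x = x).image
          fun x => ((eB j x : Fin (n+2)))) := by
  ext z
  simp only [mem_filter, mem_univ, true_and, mem_insert, mem_image]
  constructor
  · intro hfz
    by_cases hz : z ∈ sB j
    · right
      refine ⟨(eB j).symm ⟨z, hz⟩, ?_, by rw [OrderIso.apply_symm_apply]⟩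
      have hc := hcomm ((eB j).symm ⟨z, hz⟩)
      rw [OrderIso.apply_symm_apply] at hc
      simp only [hfz] at hc
      have : eB j (h ((eB j).symm ⟨z, hz⟩)) = ⟨z, hz⟩ := Subtype.ext hc
      rw [← (eB j).symm_apply_apply (h ((eB j).symm ⟨z, hz⟩)), this]
    · left
      rw [mem_sB] at hz
      push_neg at hz
      by_cases hzj : z = j.castSucc
      · exact hzj
      · exact absurd (hz hzj ▸ hfz) hlast
  · rintro (rfl | ⟨x, hx, rfl⟩)
    · exact hj
    · rw [← hcomm, hx]

lemma count_split {f : Fin (n+2) → Fin (n+2)} {j : Fin (n+1)} {h : Fin n → Fin n}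
    (hcomm : ∀ x, ((eB j (h x) : Fin (n+2))) = f ((eB j x : Fin (n+2))))
    (hj : f j.castSucc = j.castSucc) (hlast : f (Fin.last (n+1)) ≠ Fin.last (n+1)) :
    (univ.filter (fun z => f z = z)).card
      = (univ.filter fun x => h x = x).card + 1 := by
  rw [filter_split f j h hcomm hj hlast]
  rw [card_insert_of_notMem, card_image_of_injective _
    (fun a b hab => (eB j).injective (Subtype.ext hab))]
  intro hc
  obtain ⟨x, _, hx⟩ := mem_image.1 hc
  have := coe_eB_mem j x
  rw [hx, mem_sB] at this
  exact this.1 rfl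

lemma fB_cond {h : Fin n → Fin n} (j : Fin (n+1)) (hh : ModelCond h k) :
    ModelCond (fB j h) (k+1) := by
  obtain ⟨h1, h2, h3, h4⟩ := hh
  refine ⟨?_, ?_, ?_, ?_⟩
  · intro z
    by_cases hz : z ∈ sB j
    · have hze : ((eB j ((eB j).symm ⟨z, hz⟩) : Fin (n+2))) = z := by
        rw [OrderIso.apply_symm_apply]
      rw [fB, dif_pos hz]
      calc ((eB j (h ((eB j).symm ⟨z, hz⟩)) : Fin (n+2)))
          ≤ ((eB j ((eB j).symm ⟨z, hz⟩) : Fin (n+2))) := by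
            exact_mod_cast (eB j).monotone (h1 _)
        _ = z := hze
    · rw [fB_apply_not h hz]
      rw [mem_sB] at hz
      push_neg at hz
      by_cases hzj : z = j.castSucc
      · exact hzj.ge
      · rw [hz hzj]; exact Fin.le_last _
  · intro z
    by_cases hz : z ∈ sB j
    · have hfz : fB j h z = ((eB j (h ((eB j).symm ⟨z, hz⟩)) : Fin (n+2))) := dif_pos hz
      rw [hfz, fB_coe, h2]
    · rw [fB_apply_not h hz, fB_jup]
  · rw [count_split (fun x => (fB_coe j h x).symm) (fB_jup j h)
      (by rw [fB_last]; exact (Fin.castSucc_lt_last j).ne), h3]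
  · intro z
    by_cases hz : z ∈ sB j
    · set x := (eB j).symm ⟨z, hz⟩ with hxdef
      have hze : ((eB j x : Fin (n+2))) = z := by
        rw [hxdef, OrderIso.apply_symm_apply]
      obtain ⟨y, hy, hhy⟩ := h4 x
      refine ⟨((eB j y : Fin (n+2))), ?_, ?_⟩
      · rw [← hze]
        intro hc
        exact hy ((eB j).injective (Subtype.ext (by exact_mod_cast hc)))
      · rw [fB_coe, ← hze, fB_coe, hhy]
    · rw [mem_sB] at hz
      push_neg at hz
      by_cases hzj : z = j.castSucc
      · refine ⟨Fin.last (n+1), ?_, ?_⟩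
        · rw [hzj]; exact (Fin.castSucc_lt_last j).ne'
        · rw [hzj, fB_last, fB_jup]
      · rw [hz hzj]
        refine ⟨j.castSucc, (Fin.castSucc_lt_last j).ne, ?_⟩
        rw [fB_last, fB_jup]

lemma fB_p {h : Fin n → Fin n} (j : Fin (n+1)) :
    ∀ y, fB j h y = fB j h (Fin.last (n+1)) →
      y = fB j h (Fin.last (n+1)) ∨ y = Fin.last (n+1) := by
  intro y hy
  rw [fB_last] at hy ⊢
  by_cases hz : y ∈ sB j
  · exfalso
    rw [fB, dif_pos hz] at hy
    have := coe_eB_mem j (h ((eB j).symm ⟨y, hz⟩))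
    rw [hy, mem_sB] at this
    exact this.1 rfl
  · rw [mem_sB] at hz
    push_neg at hz
    by_cases hzj : y = j.castSucc
    · exact Or.inl hzj
    · exact Or.inr (hz hzj)


section Forward

variable {f : Fin (n+2) → Fin (n+2)} {j : Fin (n+1)}

lemma mem_step (h1 : ∀ x, f x ≤ x)
    (hp : ∀ y, f y = f (Fin.last (n+1)) → y = f (Fin.last (n+1)) ∨ y = Fin.last (n+1))
    (hj : j.castSucc = f (Fin.last (n+1))) {z : Fin (n+2)} (hz : z ∈ sB j) :
    f z ∈ sB j := by
  rw [mem_sB] at hz ⊢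
  constructor
  · intro hc
    rw [hj] at hc
    rcases hp z hc with h | h
    · exact hz.1 (by rw [h, ← hj])
    · exact hz.2 h
  · intro hc
    have := h1 z
    rw [hc, Fin.last_le_iff] at this
    exact hz.2 this

noncomputable def hB (f : Fin (n+2) → Fin (n+2)) (j : Fin (n+1)) (x : Fin n) : Fin n :=
  (eB j).symm (if pf : f ((eB j x : Fin (n+2))) ∈ sB j then ⟨f ((eB j x : Fin (n+2))), pf⟩
    else eB j x)

lemma eB_hB (hmem : f ((eB j x : Fin (n+2))) ∈ sB j) :
    ((eB j (hB f j x) : Fin (n+2))) = f ((eB j x : Fin (n+2))) := by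
  rw [hB, dif_pos hmem, OrderIso.apply_symm_apply]

lemma hB_comm (h1 : ∀ x, f x ≤ x)
    (hp : ∀ y, f y = f (Fin.last (n+1)) → y = f (Fin.last (n+1)) ∨ y = Fin.last (n+1))
    (hj : j.castSucc = f (Fin.last (n+1))) (x : Fin n) :
    ((eB j (hB f j x) : Fin (n+2))) = f ((eB j x : Fin (n+2))) :=
  eB_hB (mem_step h1 hp hj (coe_eB_mem j x))

lemma hB_cond (hf : ModelCond f (k+1))
    (hp : ∀ y, f y = f (Fin.last (n+1)) → y = f (Fin.last (n+1)) ∨ y = Fin.last (n+1))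
    (hj : j.castSucc = f (Fin.last (n+1))) :
    ModelCond (hB f j) k := by
  obtain ⟨h1, h2, h3, h4⟩ := hf
  have hcomm := hB_comm (j := j) h1 hp hj
  refine ⟨?_, ?_, ?_, ?_⟩
  · intro x
    have : eB j (hB f j x) ≤ eB j x := by
      rw [← Subtype.coe_le_coe, hcomm]
      exact h1 _
    rw [OrderIso.le_iff_le] at this
    exact this
  · intro x
    apply (eB j).injective
    apply Subtype.ext
    rw [hcomm, hcomm, h2]
  · have := count_split hcomm (by rw [hj, h2]) (fL_ne h1 h4)
    rw [h3] at this
    omega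
  · intro x
    obtain ⟨y', hy'ne, hy'⟩ := h4 ((eB j x : Fin (n+2)))
    have hy's : y' ∈ sB j := by
      rw [mem_sB]
      constructor
      · rintro rfl
        rw [hj, h2] at hy'
        rcases hp _ hy'.symm with h | h
        · have := coe_eB_mem j x
          rw [mem_sB] at this
          exact this.1 (by rw [h, ← hj])
        · have := coe_eB_mem j x
          rw [mem_sB] at this
          exact this.2 h
      · rintro rfl
        rcases hp _ hy'.symm with h | h
        · have := coe_eB_mem j x
          rw [mem_sB] at this
          exact this.1 (by rw [h, ← hj])
        · have := coe_eB_mem j x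
          rw [mem_sB] at this
          exact this.2 h
    refine ⟨(eB j).symm ⟨y', hy's⟩, ?_, ?_⟩
    · intro hc
      apply hy'ne
      have := congrArg (fun t => ((eB j t : Fin (n+2)))) hc
      simpa [OrderIso.apply_symm_apply] using this
    · apply (eB j).injective
      apply Subtype.ext
      rw [hcomm, hcomm, OrderIso.apply_symm_apply]
      exact hy'
end Forward

def jB (F : {f : Model (n+2) (k+1) // pA f}) : Fin (n+1) := cdA (F.1.1 (Fin.last (n+1)))

lemma jB_castSucc (F : {f : Model (n+2) (k+1) // pA f}) :
    (jB F).castSucc = F.1.1 (Fin.last (n+1)) := by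
  ext
  rw [Fin.coe_castSucc, jB, cdA_val (fL_le F.1.2.1 F.1.2.2.2.2)]

noncomputable def equivB :
    {f : Model (n+2) (k+1) // pA f} ≃ Fin (n+1) × Model n k where
  toFun F := (jB F, ⟨hB F.1.1 (jB F), hB_cond F.1.2 F.2 (jB_castSucc F)⟩)
  invFun q := ⟨⟨fB q.1 q.2.1, fB_cond q.1 q.2.2⟩, fB_p q.1⟩
  left_inv F := by
    apply Subtype.ext
    apply Subtype.ext
    funext z
    show fB (jB F) (hB F.1.1 (jB F)) z = F.1.1 z
    set f := F.1.1 with hf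
    set j := jB F with hjdef
    have hj : j.castSucc = f (Fin.last (n+1)) := jB_castSucc F
    by_cases hz : z ∈ sB j
    · rw [fB, dif_pos hz, hB_comm F.1.2.1 F.2 hj, OrderIso.apply_symm_apply]
    · rw [fB_apply_not _ hz]
      rw [mem_sB] at hz
      push_neg at hz
      by_cases hzj : z = j.castSucc
      · have h2 : ∀ x, f (f x) = f x := F.1.2.2.1
        rw [hzj, hj, h2]
      · rw [hz hzj, ← hj]
  right_inv q := by
    obtain ⟨j, H⟩ := q
    have hjB : jB ⟨⟨fB j H.1, fB_cond j H.2⟩, fB_p j⟩ = j := by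
      show cdA (fB j H.1 (Fin.last (n+1))) = j
      rw [fB_last]
      ext
      rw [cdA_val (by rw [Fin.coe_castSucc]; omega), Fin.coe_castSucc]
    refine Prod.ext hjB ?_
    apply Subtype.ext
    show hB (fB j H.1) (jB ⟨⟨fB j H.1, fB_cond j H.2⟩, fB_p j⟩) = H.1
    rw [hjB]
    funext x
    apply (eB j).injective
    apply Subtype.ext
    rw [hB_comm (fB_cond j H.2).1 (fB_p j) (by rw [fB_last]), fB_coe]

end ModelRec

namespace ModelRec

lemma card_model_rec (n k : ℕ) :
    Nat.card (Model (n+2) (k+1))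
      = (k+1) * Nat.card (Model (n+1) (k+1)) + (n+1) * Nat.card (Model n k) := by
  classical
  have hsplit : Nat.card (Model (n+2) (k+1))
      = Nat.card {f : Model (n+2) (k+1) // pA f}
        + Nat.card {f : Model (n+2) (k+1) // ¬ pA f} := by
    rw [← Nat.card_sum]
    exact Nat.card_congr (Equiv.sumCompl pA).symm
  have hA : Nat.card {f : Model (n+2) (k+1) // ¬ pA f}
      = (k+1) * Nat.card (Model (n+1) (k+1)) := by
    rw [Nat.card_congr equivA]
    have e1 : {q : Model (n+1) (k+1) × Fin (n+1) // q.1.1 q.2 = q.2}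
        ≃ Σ g : Model (n+1) (k+1), {v : Fin (n+1) // g.1 v = v} :=
      Equiv.subtypeProdEquivSigmaSubtype (fun (g : Model (n+1) (k+1)) (v : Fin (n+1)) => g.1 v = v)
    have e2 : ∀ g : Model (n+1) (k+1), {v : Fin (n+1) // g.1 v = v} ≃ Fin (k+1) := fun g =>
      (Equiv.subtypeEquivRight (fun v => by simp)).trans
        ((univ.filter fun v => g.1 v = v).orderIsoOfFin g.2.2.2.1).toEquiv.symm
    rw [Nat.card_congr (e1.trans ((Equiv.sigmaCongrRight e2).trans
      (Equiv.sigmaEquivProd _ _)))]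
    rw [Nat.card_prod, Nat.card_eq_fintype_card (α := Fin (k+1)), Fintype.card_fin, mul_comm]
  have hB2 : Nat.card {f : Model (n+2) (k+1) // pA f}
      = (n+1) * Nat.card (Model n k) := by
    rw [Nat.card_congr equivB, Nat.card_prod, Nat.card_eq_fintype_card (α := Fin (n+1)),
      Fintype.card_fin]
  rw [hsplit, hA, hB2, add_comm]

lemma card_model_zero (k : ℕ) : Nat.card (Model 0 (k+1)) = 0 := by
  have : IsEmpty (Model 0 (k+1)) := ⟨fun F => by
    have h3 := F.2.2.2.1
    simp only [Finset.univ_eq_empty, Finset.filter_empty, Finset.card_empty] at h3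
    omega⟩
  exact Nat.card_of_isEmpty

lemma card_model_one (k : ℕ) : Nat.card (Model 1 k) = 0 := by
  have : IsEmpty (Model 1 k) := ⟨fun F => by
    obtain ⟨y, hy, _⟩ := F.2.2.2.2 0
    exact hy (Subsingleton.elim y 0)⟩
  exact Nat.card_of_isEmpty

lemma card_model_k1 (n : ℕ) : Nat.card (Model (n+2) 1) = 1 := by
  rw [Nat.card_eq_one_iff_unique]
  have key : ∀ (H : Model (n+2) 1) x, H.1 x = 0 := by
    intro H x
    obtain ⟨h1, h2, h3, h4⟩ := H.2
    have h0 : (0 : Fin (n+2)) ∈ univ.filter (fun x => H.1 x = x) := by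
      simp only [mem_filter, mem_univ, true_and]
      exact Fin.le_zero_iff.1 (h1 0)
    have hx : H.1 x ∈ univ.filter (fun x => H.1 x = x) := by
      simp only [mem_filter, mem_univ, true_and]
      exact h2 x
    obtain ⟨a, ha⟩ := Finset.card_eq_one.1 h3
    rw [ha, mem_singleton] at h0 hx
    rw [hx, ← h0]
  constructor
  · constructor
    intro F G
    apply Subtype.ext
    funext x
    rw [key F x, key G x]
  · refine ⟨⟨fun _ => 0, fun x => Fin.zero_le x, fun _ => rfl, ?_, ?_⟩⟩
    · show (univ.filter (fun x : Fin (n+2) => (0 : Fin (n+2)) = x)).card = 1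
      refine Finset.card_eq_one.2 ⟨0, ?_⟩
      ext x
      simp [eq_comm]
    · intro x
      obtain ⟨y, hy⟩ := exists_ne x
      exact ⟨y, hy, rfl⟩

end ModelRec

lemma partD_zero {k : ℕ} (hk : 1 ≤ k) : partD 0 k = 0 := by
  obtain ⟨m, rfl⟩ : ∃ m, k = m + 1 := ⟨k - 1, by omega⟩
  rw [partD_eq_model, ModelRec.card_model_zero]

lemma partD_one (k : ℕ) : partD 1 k = 0 := by
  rw [partD_eq_model, ModelRec.card_model_one]

lemma partD_k1 (n : ℕ) : partD (n+2) 1 = 1 := by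
  rw [partD_eq_model, ModelRec.card_model_k1]

lemma partD_rec (n k : ℕ) :
    partD (n+2) (k+1) = (k+1) * partD (n+1) (k+1) + (n+1) * partD n k := by
  rw [partD_eq_model, partD_eq_model, partD_eq_model]
  exact ModelRec.card_model_rec n k

/-- The ordinary generating function of `partD · k` as a formal power series. -/
noncomputable def partDogf (k : ℕ) : PowerSeries ℚ :=
  PowerSeries.mk fun n => (partD n k : ℚ)

open PowerSeries in
theorem partDogf_recursion :
    partDogf 1 = X ^ 2 * (1 - X)⁻¹ ∧
    ∀ k : ℕ, 2 ≤ k →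
      partDogf k =
        X ^ 2 * (1 - (k : ℚ⟦X⟧) * X)⁻¹ *
          (d⁄dX ℚ (X * partDogf (k - 1))) := by
  constructor
  · rw [eq_mul_inv_iff_mul_eq (by
      rw [map_sub, map_one, constantCoeff_X, sub_zero]; exact one_ne_zero)]
    ext n
    rw [mul_sub, mul_one, map_sub, coeff_X_pow]
    rcases n with _ | n
    · rw [coeff_zero_mul_X]
      simp [partDogf, partD_zero le_rfl]
    · rw [coeff_succ_mul_X]
      rcases n with _ | n
      · simp [partDogf, partD_zero le_rfl, partD_one]
      · rcases n with _ | n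
        · simp [partDogf, partD_one, partD_k1]
        · simp [partDogf, partD_k1]
  · intro k hk
    obtain ⟨m, rfl⟩ : ∃ m, k = m + 2 := ⟨k - 2, by omega⟩
    rw [show m + 2 - 1 = m + 1 from rfl, mul_right_comm]
    rw [eq_mul_inv_iff_mul_eq (by
      rw [map_sub, map_one, map_mul, constantCoeff_X, mul_zero, sub_zero]
      exact one_ne_zero)]
    ext n
    rw [mul_sub, mul_one, map_sub]
    rw [show ((((m : ℕ) + 2 : ℕ) : ℚ⟦X⟧)) = C (((m : ℕ) + 2 : ℕ) : ℚ) from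
      (map_natCast (C : ℚ →+* ℚ⟦X⟧) _).symm, mul_left_comm, coeff_C_mul]
    rw [coeff_X_pow_mul']
    have hz0 : partD 0 (m+2) = 0 := partD_zero (by omega)
    rcases n with _ | n
    · rw [coeff_zero_mul_X]
      simp [partDogf, hz0]
    · rw [coeff_succ_mul_X]
      rcases n with _ | n
      · simp [partDogf, hz0, partD_one]
      · rw [if_pos (by omega), show n + 1 + 1 - 2 = n from rfl, coeff_derivative,
          coeff_succ_X_mul]
        simp only [partDogf, coeff_mk]
        have hrec := partD_rec n (m+1)
        push_cast [hrec]
        ring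
end

section
/- For all n ≥ 0 and k ≥ 0, D(n,k) = Σ_{s=n−k}^{n} C(n,s)·(−1)^{n−s}·S(s, s+k−n), where S denotes Stirling numbers of the second kind. -/
set_option linter.unusedSectionVars false
set_option maxHeartbeats 1000000

/-- The Stirling number of the second kind: the number of partitions of an
`m`-element set into `j` blocks. -/
noncomputable def stirling2 (m j : ℕ) : ℕ :=
  Nat.card {P : Finpartition (Finset.univ : Finset (Fin m)) // P.parts.card = j}

open Finset


variable {α β : Type*} [DecidableEq α] [DecidableEq β]

/-- Map a finpartition of `s` along an embedding. -/
def embMap (f : α ↪ β) {s : Finset α} (P : Finpartition s) : Finpartition (s.map f) where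
  parts := P.parts.map ⟨Finset.map f, Finset.map_injective f⟩
  supIndep := by
    rw [Finset.supIndep_iff_pairwiseDisjoint]
    intro b1 h1 b2 h2 hne
    simp only [coe_map, Set.mem_image, mem_coe, Function.Embedding.coeFn_mk] at h1 h2
    obtain ⟨a1, ha1, rfl⟩ := h1
    obtain ⟨a2, ha2, rfl⟩ := h2
    have hne' : a1 ≠ a2 := by rintro rfl; exact hne rfl
    have hd := P.disjoint ha1 ha2 hne'
    simp only [Function.onFun, id] at hd ⊢
    exact (Finset.disjoint_map f).2 hd
  sup_parts := by
    ext b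
    simp only [Finset.mem_sup, mem_map, Function.Embedding.coeFn_mk, id_eq]
    constructor
    · rintro ⟨c, ⟨p, hp, rfl⟩, hb⟩
      rw [Finset.mem_map] at hb
      obtain ⟨a, ha, rfl⟩ := hb
      exact ⟨a, P.le hp ha, rfl⟩
    · rintro ⟨a, ha, rfl⟩
      have := P.sup_parts
      have ha' : a ∈ P.parts.sup id := by rw [this]; exact ha
      rw [Finset.mem_sup] at ha'
      obtain ⟨p, hp, hap⟩ := ha'
      exact ⟨p.map f, ⟨p, hp, rfl⟩, mem_map_of_mem f hap⟩
  bot_notMem := by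
    simp only [bot_eq_empty, mem_map, Function.Embedding.coeFn_mk]
    rintro ⟨p, hp, hpe⟩
    rw [Finset.map_eq_empty] at hpe
    subst hpe
    exact P.bot_notMem hp

@[simp]
theorem embMap_parts (f : α ↪ β) {s : Finset α} (P : Finpartition s) :
    (embMap f P).parts = P.parts.map ⟨Finset.map f, Finset.map_injective f⟩ := rfl

theorem map_preimage_of_subset (f : α ↪ β) {s : Finset α} {b : Finset β} (hb : b ⊆ s.map f) :
    (b.preimage f f.injective.injOn).map f = b := by
  ext y
  simp only [mem_map, mem_preimage]
  constructor
  · rintro ⟨x, hx, rfl⟩; exact hx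
  · intro hy
    obtain ⟨x, _, rfl⟩ := mem_map.1 (hb hy)
    exact ⟨x, hy, rfl⟩

/-- Inverse: pull a finpartition of `s.map f` back to `s`. -/
noncomputable def embInv (f : α ↪ β) {s : Finset α} (Q : Finpartition (s.map f)) : Finpartition s where
  parts := Q.parts.image (fun b => b.preimage f f.injective.injOn)
  supIndep := by
    rw [Finset.supIndep_iff_pairwiseDisjoint]
    intro b1 h1 b2 h2 hne
    simp only [coe_image, Set.mem_image, mem_coe] at h1 h2
    obtain ⟨c1, hc1, rfl⟩ := h1
    obtain ⟨c2, hc2, rfl⟩ := h2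
    have hne' : c1 ≠ c2 := by rintro rfl; exact hne rfl
    have hd := Q.disjoint hc1 hc2 hne'
    simp only [Function.onFun, id] at hd ⊢
    rw [Finset.disjoint_left] at hd ⊢
    intro a ha1 ha2
    exact hd (mem_preimage.1 ha1) (mem_preimage.1 ha2)
  sup_parts := by
    ext a
    simp only [Finset.mem_sup, mem_image, id_eq]
    constructor
    · rintro ⟨c, ⟨b, hb, rfl⟩, ha⟩
      have : f a ∈ s.map f := Q.le hb (mem_preimage.1 ha)
      obtain ⟨x, hx, hxa⟩ := mem_map.1 this
      rwa [← f.injective hxa]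
    · intro ha
      have : f a ∈ s.map f := mem_map_of_mem f ha
      rw [← Q.sup_parts, Finset.mem_sup] at this
      obtain ⟨b, hb, hab⟩ := this
      exact ⟨b.preimage f f.injective.injOn, ⟨b, hb, rfl⟩, mem_preimage.2 hab⟩
  bot_notMem := by
    simp only [bot_eq_empty, mem_image]
    rintro ⟨b, hb, hbe⟩
    obtain ⟨y, hy⟩ := Q.nonempty_of_mem_parts hb
    obtain ⟨x, _, rfl⟩ := mem_map.1 (Q.le hb hy)
    have : x ∈ b.preimage f f.injective.injOn := mem_preimage.2 hy
    rw [hbe] at this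
    exact notMem_empty x this

theorem embInv_embMap (f : α ↪ β) {s : Finset α} (P : Finpartition s) :
    embInv f (embMap f P) = P := by
  ext b
  simp only [embInv, embMap, mem_image, mem_map, Function.Embedding.coeFn_mk]
  constructor
  · rintro ⟨c, ⟨p, hp, rfl⟩, rfl⟩
    rwa [Finset.preimage_map]
  · intro hb
    exact ⟨b.map f, ⟨b, hb, rfl⟩, Finset.preimage_map f b⟩

theorem embMap_embInv (f : α ↪ β) {s : Finset α} (Q : Finpartition (s.map f)) :
    embMap f (embInv f Q) = Q := by
  ext b
  simp only [embInv, embMap, mem_map, mem_image, Function.Embedding.coeFn_mk]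
  constructor
  · rintro ⟨c, ⟨d, hd, rfl⟩, rfl⟩
    rwa [map_preimage_of_subset f (Q.le hd)]
  · intro hb
    exact ⟨b.preimage f f.injective.injOn, ⟨b, hb, rfl⟩,
      map_preimage_of_subset f (Q.le hb)⟩

/-- The equivalence of finpartitions along an embedding. -/
noncomputable def embEquiv (f : α ↪ β) (s : Finset α) : Finpartition s ≃ Finpartition (s.map f) where
  toFun := embMap f
  invFun := embInv f
  left_inv := embInv_embMap f
  right_inv := embMap_embInv f
noncomputable def countD (s : Finset α) (k : ℕ) : ℕ :=
  Nat.card {P : Finpartition s // P.parts.card = k ∧ ∀ b ∈ P.parts, 2 ≤ b.card}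


theorem partD_eq_countD (n k : ℕ) :
    partD n k = countD (Finset.univ : Finset (Fin n)) k := rfl

theorem countD_map (f : α ↪ β) (s : Finset α) (k : ℕ) :
    countD (s.map f) k = countD s k := by
  refine (Nat.card_congr ((embEquiv f s).subtypeEquiv fun P => ?_)).symm
  have hparts : ((embEquiv f s) P).parts = P.parts.map ⟨Finset.map f, Finset.map_injective f⟩ :=
    rfl
  rw [hparts, Finset.card_map]
  refine and_congr Iff.rfl ?_
  constructor
  · intro h2 b hb
    rw [Finset.mem_map] at hb
    obtain ⟨p, hp, rfl⟩ := hb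
    simp only [Function.Embedding.coeFn_mk, Finset.card_map]
    exact h2 p hp
  · intro h2 b hb
    have : b.map f ∈ P.parts.map ⟨Finset.map f, Finset.map_injective f⟩ :=
      Finset.mem_map_of_mem _ hb
    simpa using h2 (b.map f) this

theorem exists_emb (s : Finset α) :
    ∃ f : Fin s.card ↪ α, (Finset.univ : Finset (Fin s.card)).map f = s := by
  refine ⟨(s.equivFin.symm.toEmbedding).trans (Function.Embedding.subtype _), ?_⟩
  ext a
  simp only [mem_map, mem_univ, true_and, Function.Embedding.trans_apply,
    Equiv.coe_toEmbedding, Function.Embedding.coe_subtype]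
  constructor
  · rintro ⟨i, rfl⟩; exact (s.equivFin.symm i).2
  · intro ha; exact ⟨s.equivFin ⟨a, ha⟩, by simp⟩

theorem countD_eq_partD (s : Finset α) (k : ℕ) : countD s k = partD s.card k := by
  obtain ⟨f, hf⟩ := exists_emb s
  rw [partD_eq_countD, ← countD_map f univ, hf]

variable {α β : Type*} [DecidableEq α] [DecidableEq β]

section Singles
variable {s : Finset α}

/-- The set of elements lying in singleton blocks. -/
noncomputable def singles (P : Finpartition s) : Finset α :=
  s.filter (fun a => P.part a = {a})

theorem mem_singles {P : Finpartition s} {a : α} :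
    a ∈ singles P ↔ a ∈ s ∧ {a} ∈ P.parts := by
  rw [singles, mem_filter]
  constructor
  · rintro ⟨has, hpa⟩; exact ⟨has, hpa ▸ P.part_mem.2 has⟩
  · rintro ⟨has, hpa⟩; exact ⟨has, P.part_eq_of_mem hpa (mem_singleton_self a)⟩

theorem singles_subset (P : Finpartition s) : singles P ⊆ s := filter_subset _ _

theorem disjoint_singles_of_two_le {P : Finpartition s} {b : Finset α}
    (hb : b ∈ P.parts) (h2 : 2 ≤ b.card) : Disjoint b (singles P) := by
  rw [Finset.disjoint_left]
  intro a hab has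
  rw [mem_singles] at has
  have := P.eq_of_mem_parts hb has.2 hab (mem_singleton_self a)
  rw [this, card_singleton] at h2; omega

theorem avoid_singles_parts (P : Finpartition s) :
    (P.avoid (singles P)).parts = P.parts.filter (fun b => 2 ≤ b.card) := by
  ext c
  rw [Finpartition.mem_avoid, mem_filter]
  constructor
  · rintro ⟨d, hd, hdle, rfl⟩
    have hd1 : d.Nonempty := P.nonempty_of_mem_parts hd
    rcases Nat.lt_or_ge d.card 2 with h | h
    · exfalso
      have : d.card = 1 := by have := hd1.card_pos; omega
      obtain ⟨a, rfl⟩ := card_eq_one.1 this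
      refine hdle (singleton_subset_iff.2 ?_)
      exact mem_singles.2 ⟨P.le hd (mem_singleton_self a), hd⟩
    · have hdisj := disjoint_singles_of_two_le hd h
      rw [sdiff_eq_self_of_disjoint hdisj]
      exact ⟨hd, h⟩
  · rintro ⟨hc, h2⟩
    have hdisj := disjoint_singles_of_two_le hc h2
    refine ⟨c, hc, ?_, sdiff_eq_self_of_disjoint hdisj⟩
    intro hle
    obtain ⟨a, ha⟩ := P.nonempty_of_mem_parts hc
    exact Finset.disjoint_left.1 hdisj ha (hle ha)

theorem singleton_parts_eq (P : Finpartition s) :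
    P.parts.filter (fun b => b.card = 1) = (singles P).image singleton := by
  ext b
  rw [mem_filter, mem_image]
  constructor
  · rintro ⟨hb, h1⟩
    obtain ⟨a, rfl⟩ := card_eq_one.1 h1
    exact ⟨a, mem_singles.2 ⟨P.le hb (mem_singleton_self a), hb⟩, rfl⟩
  · rintro ⟨a, ha, rfl⟩
    exact ⟨(mem_singles.1 ha).2, card_singleton a⟩

theorem parts_eq_union (P : Finpartition s) :
    P.parts = P.parts.filter (fun b => 2 ≤ b.card) ∪ (singles P).image singleton := by
  rw [← singleton_parts_eq]
  ext b
  simp only [mem_union, mem_filter]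
  constructor
  · intro hb
    have h1 := (P.nonempty_of_mem_parts hb).card_pos
    rcases Nat.lt_or_ge b.card 2 with h | h
    · exact Or.inr ⟨hb, by omega⟩
    · exact Or.inl ⟨hb, h⟩
  · rintro (⟨hb, _⟩ | ⟨hb, _⟩) <;> exact hb

theorem parts_card_split (P : Finpartition s) :
    P.parts.card = (P.parts.filter (fun b => 2 ≤ b.card)).card + (singles P).card := by
  have hd : Disjoint (P.parts.filter (fun b => 2 ≤ b.card)) ((singles P).image singleton) := by
    rw [Finset.disjoint_left]
    rintro b hb hb2
    rw [mem_image] at hb2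
    obtain ⟨a, _, rfl⟩ := hb2
    have := (mem_filter.1 hb).2
    rw [card_singleton] at this; omega
  conv_lhs => rw [parts_eq_union P]
  rw [card_union_of_disjoint hd, card_image_of_injective _ (fun a b => singleton_inj.1)]
end Singles

section Union

/-- Disjoint union of finpartitions. -/
def pUnion {s t : Finset α} (hst : Disjoint s t) (P : Finpartition s) (Q : Finpartition t) :
    Finpartition (s ∪ t) where
  parts := P.parts ∪ Q.parts
  supIndep := by
    rw [Finset.supIndep_iff_pairwiseDisjoint]
    intro b1 h1 b2 h2 hne
    simp only [coe_union, Set.mem_union, mem_coe] at h1 h2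
    rcases h1 with h1 | h1 <;> rcases h2 with h2 | h2
    · exact P.disjoint h1 h2 hne
    · exact hst.mono (P.le h1) (Q.le h2)
    · exact (hst.mono (P.le h2) (Q.le h1)).symm
    · exact Q.disjoint h1 h2 hne
  sup_parts := by rw [Finset.sup_union, P.sup_parts, Q.sup_parts]; rfl
  bot_notMem := by
    rw [Finset.mem_union]
    rintro (h | h)
    exacts [P.bot_notMem h, Q.bot_notMem h]

/-- Add back the singleton blocks. -/
noncomputable def addSingles {s : Finset α} {T : Finset α} (hT : T ⊆ s)
    (Q : Finpartition (s \ T)) : Finpartition s :=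
  (pUnion disjoint_sdiff_self_left Q (⊥ : Finpartition T)).copy (sdiff_union_of_subset hT)

theorem addSingles_parts {s T : Finset α} (hT : T ⊆ s) (Q : Finpartition (s \ T)) :
    (addSingles hT Q).parts = Q.parts ∪ T.image singleton := by
  have : (⊥ : Finpartition T).parts = T.image singleton := by
    rw [Finpartition.parts_bot, Finset.map_eq_image]; rfl
  simp only [addSingles, Finpartition.copy, pUnion, this]

theorem addSingles_singles {s T : Finset α} (hT : T ⊆ s) (Q : Finpartition (s \ T))
    (hQ : ∀ b ∈ Q.parts, 2 ≤ b.card) : singles (addSingles hT Q) = T := by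
  ext a
  rw [mem_singles, addSingles_parts, mem_union, mem_image]
  constructor
  · rintro ⟨has, h | h⟩
    · exact absurd (hQ _ h) (by rw [card_singleton]; omega)
    · obtain ⟨x, hx, hxa⟩ := h
      rwa [← singleton_inj.1 hxa]
  · intro ha
    exact ⟨hT ha, Or.inr ⟨a, ha, rfl⟩⟩

theorem addSingles_card {s T : Finset α} (hT : T ⊆ s) (Q : Finpartition (s \ T))
    (hQ : ∀ b ∈ Q.parts, 2 ≤ b.card) :
    (addSingles hT Q).parts.card = Q.parts.card + T.card := by
  rw [addSingles_parts, card_union_of_disjoint, card_image_of_injective _ (fun a b => singleton_inj.1)]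
  rw [Finset.disjoint_left]
  rintro b hb hb2
  rw [mem_image] at hb2
  obtain ⟨a, _, rfl⟩ := hb2
  have := hQ _ hb
  rw [card_singleton] at this; omega

theorem addSingles_filter {s T : Finset α} (hT : T ⊆ s) (Q : Finpartition (s \ T))
    (hQ : ∀ b ∈ Q.parts, 2 ≤ b.card) :
    (addSingles hT Q).parts.filter (fun b => 2 ≤ b.card) = Q.parts := by
  rw [addSingles_parts, filter_union]
  have h1 : Q.parts.filter (fun b => 2 ≤ b.card) = Q.parts := filter_eq_self.2 hQ
  have h2 : (T.image singleton).filter (fun b : Finset α => 2 ≤ b.card) = ∅ := by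
    rw [filter_eq_empty_iff]
    rintro b hb
    rw [mem_image] at hb
    obtain ⟨a, _, rfl⟩ := hb
    rw [card_singleton]; omega
  rw [h1, h2, union_empty]

end Union

section Fiber
variable {s T : Finset α} {j : ℕ}

noncomputable def fiberEquiv (hT : T ⊆ s) (hTj : T.card ≤ j) :
    {P : Finpartition s // P.parts.card = j ∧ singles P = T} ≃
      {Q : Finpartition (s \ T) // Q.parts.card = j - T.card ∧ ∀ b ∈ Q.parts, 2 ≤ b.card} where
  toFun P := ⟨P.1.avoid T, by
    obtain ⟨P, hPj, hPT⟩ := P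
    subst hPT
    dsimp only
    have hsplit := parts_card_split P
    constructor
    · rw [avoid_singles_parts]; omega
    · intro b hb
      rw [avoid_singles_parts] at hb
      exact (mem_filter.1 hb).2⟩
  invFun Q := ⟨addSingles hT Q.1, by
    obtain ⟨Q, hQc, hQ2⟩ := Q
    refine ⟨?_, addSingles_singles hT Q hQ2⟩
    rw [addSingles_card hT Q hQ2, hQc, Nat.sub_add_cancel hTj]⟩
  left_inv := by
    rintro ⟨P, hPj, hPT⟩
    subst hPT
    apply Subtype.ext
    apply Finpartition.ext
    dsimp only
    rw [addSingles_parts, avoid_singles_parts]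
    exact (parts_eq_union P).symm
  right_inv := by
    rintro ⟨Q, hQc, hQ2⟩
    apply Subtype.ext
    apply Finpartition.ext
    dsimp only
    have hs := addSingles_singles hT Q hQ2
    have key := avoid_singles_parts (addSingles hT Q)
    rw [hs] at key
    rw [key, addSingles_filter hT Q hQ2]

theorem fiber_isEmpty (hTj : ¬ T.card ≤ j) :
    IsEmpty {P : Finpartition s // P.parts.card = j ∧ singles P = T} := by
  constructor
  rintro ⟨P, hPj, hPT⟩
  have hsplit := parts_card_split P
  rw [hPT] at hsplit
  omega

end Fiber

theorem nat_card_fiber {X : Type*} [Finite X] {γ : Type*} [DecidableEq γ] (f : X → γ)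
    (t : Finset γ) (h : ∀ x, f x ∈ t) :
    Nat.card X = ∑ T ∈ t, Nat.card {x : X // f x = T} := by
  classical
  cases nonempty_fintype X
  rw [Nat.card_eq_fintype_card, ← Finset.card_univ,
    Finset.card_eq_sum_card_fiberwise (fun x _ => h x)]
  refine Finset.sum_congr rfl fun T _ => ?_
  rw [Nat.card_eq_fintype_card, Fintype.card_subtype]

theorem countS_decomp (s : Finset α) (j : ℕ) :
    Nat.card {P : Finpartition s // P.parts.card = j} =
      ∑ T ∈ s.powerset, (if T.card ≤ j then countD (s \ T) (j - T.card) else 0) := by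
  classical
  rw [nat_card_fiber (fun P : {P : Finpartition s // P.parts.card = j} => singles P.1) s.powerset
    (fun P => mem_powerset.2 (singles_subset P.1))]
  refine Finset.sum_congr rfl fun T hTmem => ?_
  rw [mem_powerset] at hTmem
  have e1 : {x : {P : Finpartition s // P.parts.card = j} // singles x.1 = T} ≃
      {P : Finpartition s // P.parts.card = j ∧ singles P = T} :=
    Equiv.subtypeSubtypeEquivSubtypeInter
      (fun P : Finpartition s => P.parts.card = j) (fun P => singles P = T)
  by_cases h : T.card ≤ j
  · rw [if_pos h, countD]
    exact Nat.card_congr (e1.trans (fiberEquiv hTmem h))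
  · rw [if_neg h, Nat.card_congr e1]
    have := fiber_isEmpty (s := s) (T := T) (j := j) h
    exact Nat.card_of_isEmpty
theorem stirling2_eq (m r : ℕ) :
    stirling2 m r =
      ∑ i ∈ range (m + 1), m.choose i * (if i ≤ r then partD (m - i) (r - i) else 0) := by
  classical
  have h0 : stirling2 m r =
      Nat.card {P : Finpartition (univ : Finset (Fin m)) // P.parts.card = r} := rfl
  rw [h0, countS_decomp]
  have step : ∀ T ∈ (univ : Finset (Fin m)).powerset,
      (if T.card ≤ r then countD (univ \ T) (r - T.card) else 0) =
        (fun n => if n ≤ r then partD (m - n) (r - n) else 0) T.card := by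
    intro T _
    by_cases h : T.card ≤ r
    · simp only [if_pos h]
      rw [countD_eq_partD, card_sdiff_of_subset (subset_univ T), card_univ, Fintype.card_fin]
    · simp only [if_neg h]
  rw [Finset.sum_congr rfl step, Finset.sum_powerset, card_univ, Fintype.card_fin]
  refine Finset.sum_congr rfl fun i _ => ?_
  rw [Finset.sum_powersetCard i univ (fun n => if n ≤ r then partD (m - n) (r - n) else 0),
    card_univ, Fintype.card_fin, smul_eq_mul]

theorem ortho (n j : ℕ) (hj : j ≤ n) :
    (∑ s ∈ Finset.range (n + 1), (-1 : ℤ) ^ (n - s) * (n.choose s) * (s.choose j)) =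
      if j = n then 1 else 0 := by
  have hsplit : n + 1 = j + (n + 1 - j) := by omega
  rw [hsplit, Finset.range_add, Finset.sum_union (Finset.disjoint_left.2 (by
    intro x hx hx2
    rw [Finset.mem_range] at hx
    rw [Finset.mem_map] at hx2
    obtain ⟨y, _, rfl⟩ := hx2
    simp only [addLeftEmbedding_apply] at hx
    omega)), Finset.sum_map]
  have h1 : ∑ s ∈ Finset.range j, (-1 : ℤ) ^ (n - s) * (n.choose s) * (s.choose j) = 0 := by
    refine Finset.sum_eq_zero fun s hs => ?_
    rw [Finset.mem_range] at hs
    rw [Nat.choose_eq_zero_of_lt hs]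
    push_cast; ring
  rw [h1, zero_add]
  have h2 : ∀ u ∈ Finset.range (n + 1 - j),
      (-1 : ℤ) ^ (n - (addLeftEmbedding j u)) * (n.choose (addLeftEmbedding j u)) *
        ((addLeftEmbedding j u).choose j) =
      (n.choose j : ℤ) * ((-1) ^ ((n - j) - u) * ((n - j).choose u)) := by
    intro u hu
    rw [Finset.mem_range] at hu
    simp only [addLeftEmbedding_apply]
    have hc := Nat.choose_mul (n := n) (show j ≤ j + u by omega)
    have hc2 : j + u - j = u := by omega
    rw [hc2] at hc
    have he : n - (j + u) = (n - j) - u := by omega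
    rw [he, mul_assoc, ← Nat.cast_mul, hc]
    push_cast; ring
  rw [Finset.sum_congr rfl h2, ← Finset.mul_sum]
  have hN : n + 1 - j = (n - j) + 1 := by omega
  rw [hN]
  set N := n - j with hNdef
  have hstep : ∑ u ∈ Finset.range (N + 1), (-1 : ℤ) ^ (N - u) * (N.choose u) =
      ∑ u ∈ Finset.range (N + 1), (-1 : ℤ) ^ u * (N.choose u) := by
    rw [← Finset.sum_range_reflect (fun u => (-1 : ℤ) ^ u * (N.choose u)) (N + 1)]
    refine Finset.sum_congr rfl fun u hu => ?_
    rw [Finset.mem_range] at hu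
    simp only [Nat.add_sub_cancel]
    rw [Nat.choose_symm (by omega)]
  rw [hstep, Int.alternating_sum_range_choose]
  by_cases hjn : j = n
  · subst hjn
    simp [hNdef]
  · have : ¬ N = 0 := by omega
    rw [if_neg this, if_neg hjn, mul_zero]

theorem partD_eq_alternating_sum_stirling (n k : ℕ) :
    (partD n k : ℤ) =
      ∑ s ∈ Finset.Icc (n - k) n,
        (n.choose s : ℤ) * (-1) ^ (n - s) * stirling2 s (s + k - n) := by
  have stepA : ∀ s ∈ Finset.Icc (n - k) n,
      (stirling2 s (s + k - n) : ℤ) =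
        ∑ j ∈ range (n + 1), (s.choose j : ℤ) *
          (if n - k ≤ j then (partD j (j + k - n) : ℤ) else 0) := by
    intro s hs
    rw [Finset.mem_Icc] at hs
    obtain ⟨hs1, hs2⟩ := hs
    have hkn : n ≤ s + k := by omega
    rw [stirling2_eq s (s + k - n)]
    push_cast [apply_ite (Nat.cast : ℕ → ℤ)]
    rw [← Finset.sum_range_reflect
      (fun i => (s.choose i : ℤ) * (if i ≤ s + k - n then (partD (s - i) (s + k - n - i) : ℤ) else 0))
      (s + 1)]
    rw [← Finset.sum_subset (Finset.range_subset_range.2 (show s + 1 ≤ n + 1 by omega))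
      (fun j _ hjs => ?_)]
    · refine Finset.sum_congr rfl fun j hj => ?_
      rw [Finset.mem_range] at hj
      have hj' : j ≤ s := by omega
      simp only [Nat.add_sub_cancel]
      rw [Nat.choose_symm hj']
      congr 1
      rw [if_congr (show s - j ≤ s + k - n ↔ n - k ≤ j by omega)
        (by rw [show s - (s - j) = j by omega, show s + k - n - (s - j) = j + k - n by omega])
        rfl]
    · rw [Finset.mem_range, not_lt] at hjs
      rw [Nat.choose_eq_zero_of_lt (by omega)]
      push_cast; ring
  rw [Finset.sum_congr rfl fun s hs => by rw [stepA s hs]]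
  simp_rw [Finset.mul_sum]
  rw [Finset.sum_comm]
  have stepC : ∀ j ∈ range (n + 1),
      (∑ s ∈ Finset.Icc (n - k) n, (n.choose s : ℤ) * (-1) ^ (n - s) *
        ((s.choose j : ℤ) * (if n - k ≤ j then (partD j (j + k - n) : ℤ) else 0))) =
      if j = n then (partD n k : ℤ) else 0 := by
    intro j hj
    rw [Finset.mem_range] at hj
    by_cases hX : n - k ≤ j
    · simp only [if_pos hX]
      have hinner : (∑ s ∈ Finset.Icc (n - k) n, (n.choose s : ℤ) * (-1) ^ (n - s) *
          (s.choose j : ℤ)) = if j = n then 1 else 0 := by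
        have hext : (∑ s ∈ Finset.Icc (n - k) n, (n.choose s : ℤ) * (-1) ^ (n - s) *
            (s.choose j : ℤ)) = ∑ s ∈ range (n + 1), (n.choose s : ℤ) * (-1) ^ (n - s) *
            (s.choose j : ℤ) := by
          refine Finset.sum_subset
            (fun x hx => Finset.mem_range.2 (by rw [Finset.mem_Icc] at hx; omega))
            (fun x hxr hxi => ?_)
          rw [Finset.mem_range] at hxr
          rw [Finset.mem_Icc] at hxi
          rw [Nat.choose_eq_zero_of_lt (show x < j by omega)]
          push_cast; ring
        rw [hext, ← ortho n j (by omega)]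
        exact Finset.sum_congr rfl fun x _ => by ring
      calc (∑ s ∈ Finset.Icc (n - k) n, (n.choose s : ℤ) * (-1) ^ (n - s) *
            ((s.choose j : ℤ) * (partD j (j + k - n) : ℤ)))
          = (∑ s ∈ Finset.Icc (n - k) n, (n.choose s : ℤ) * (-1) ^ (n - s) *
            (s.choose j : ℤ)) * (partD j (j + k - n) : ℤ) := by
            rw [Finset.sum_mul]
            exact Finset.sum_congr rfl fun x _ => by ring
        _ = (if j = n then 1 else 0) * (partD j (j + k - n) : ℤ) := by rw [hinner]
        _ = if j = n then (partD n k : ℤ) else 0 := by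
            by_cases hjn : j = n
            · rw [if_pos hjn, if_pos hjn, one_mul, hjn, show n + k - n = k by omega]
            · rw [if_neg hjn, if_neg hjn, zero_mul]
    · simp only [if_neg hX, mul_zero, Finset.sum_const_zero]
      rw [if_neg (by omega)]
  rw [Finset.sum_congr rfl stepC, Finset.sum_ite_eq' (range (n + 1)) n
    (fun _ => (partD n k : ℤ)), if_pos (Finset.mem_range.2 (by omega))]
end
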